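/- Suppose Q ∈ Pos(Y⊗X) is diagonal in the standard basis and Y₀ ∈ Herm(X) satisfies 1_Y⊗Y₀ ≤ Q. Then the diagonal operator Y obtained from the completely dephased Λ_X(Y₀) by replacing each negative diagonal entry by 0 also satisfies 1_Y⊗Y ≤ Q, is positive semidefinite, and Tr(Y) ≥ Tr(Y₀). -/

import Mathlib

open Matrix
open scoped Kronecker ComplexOrder

noncomputable section

/-- `Φ ⊗ id` : apply a linear map `Φ` on `L(X)` to the first tensor factor of `L(X ⊗ Z)`. -/
def lmapTensorId {n m k : Type*} [Fintype n] [Fintype k]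
    (Φ : Matrix n n ℂ →ₗ[ℂ] Matrix m m ℂ)
    (M : Matrix (n × k) (n × k) ℂ) : Matrix (m × k) (m × k) ℂ :=
  fun p q => Φ (fun i j => M (i, p.2) (j, q.2)) p.1 q.1

/-- `id ⊗ Ψ` : apply a linear map `Ψ` on `L(Z)` to the second tensor factor of `L(Y ⊗ Z)`. -/
def idTensorLmap {n k l : Type*} [Fintype n] [Fintype k]
    (Ψ : Matrix k k ℂ →ₗ[ℂ] Matrix l l ℂ)
    (M : Matrix (n × k) (n × k) ℂ) : Matrix (n × l) (n × l) ℂ :=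
  fun p q => Ψ (fun a b => M (p.1, a) (q.1, b)) p.2 q.2

/-- Complete positivity: `Φ ⊗ id_k` maps positive semidefinite operators to positive
semidefinite operators for every finite-dimensional ancilla `k`. -/
def IsCompletelyPositive {n m : Type*} [Fintype n] [Fintype m]
    (Φ : Matrix n n ℂ →ₗ[ℂ] Matrix m m ℂ) : Prop :=
  ∀ (k : Type) [Fintype k] [DecidableEq k],
    ∀ M : Matrix (n × k) (n × k) ℂ, M.PosSemidef → (lmapTensorId Φ M).PosSemidef

def IsTracePreserving {n m : Type*} [Fintype n] [Fintype m]
    (Φ : Matrix n n ℂ →ₗ[ℂ] Matrix m m ℂ) : Prop :=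
  ∀ M : Matrix n n ℂ, (Φ M).trace = M.trace

/-- Partial trace over the first tensor factor. -/
def trFst {n k : Type*} [Fintype n] (M : Matrix (n × k) (n × k) ℂ) : Matrix k k ℂ :=
  fun a b => ∑ i : n, M (i, a) (i, b)

/-- Partial trace over the second tensor factor. -/
def trSnd {n k : Type*} [Fintype k] (M : Matrix (n × k) (n × k) ℂ) : Matrix n n ℂ :=
  fun i j => ∑ a : k, M (i, a) (j, a)

/-- Hilbert-Schmidt inner product `⟨A, B⟩ = Tr(A* B)`. -/
def minner {n : Type*} [Fintype n] (A B : Matrix n n ℂ) : ℂ := (Aᴴ * B).trace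

/-- Square root of a positive semidefinite matrix, as `Matrix.PosSemidef.sqrt` was defined
in the older Mathlib. -/
def posSemidefSqrt {n : Type*} [Fintype n] [DecidableEq n] {A : Matrix n n ℂ}
    (hA : A.PosSemidef) : Matrix n n ℂ :=
  hA.1.eigenvectorUnitary.1 * diagonal ((↑) ∘ (Real.sqrt ·) ∘ hA.1.eigenvalues) *
    (star hA.1.eigenvectorUnitary : Matrix n n ℂ)

open Classical in
/-- Square root of a positive semidefinite matrix (junk value `0` otherwise). -/
def msqrt {n : Type*} [Fintype n] [DecidableEq n] (M : Matrix n n ℂ) : Matrix n n ℂ :=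
  if h : M.PosSemidef then posSemidefSqrt h else 0

/-- Trace norm `‖M‖₁ = Tr √(M* M)`. -/
def traceNorm {n : Type*} [Fintype n] [DecidableEq n] (M : Matrix n n ℂ) : ℝ :=
  ((posSemidefSqrt (Matrix.posSemidef_conjTranspose_mul_self M)).trace).re

/-- Fidelity `F(Q, R) = ‖√Q √R‖₁` of positive semidefinite matrices. -/
def fid {n : Type*} [Fintype n] [DecidableEq n] (Q R : Matrix n n ℂ) : ℝ :=
  traceNorm (msqrt Q * msqrt R)

/-- Choi-Jamiolkowski operator `J(Φ) = Σ_{i,j} Φ(|i⟩⟨j|) ⊗ |i⟩⟨j|`. -/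
def choi {n m : Type*} [Fintype n] [DecidableEq n] [Fintype m]
    (Φ : Matrix n n ℂ →ₗ[ℂ] Matrix m m ℂ) : Matrix (m × n) (m × n) ℂ :=
  fun p q => Φ (Matrix.single p.2 q.2 1) p.1 q.1

/-- Tensor product of vectors. -/
def tensorVec {α β : Type*} (v : α → ℂ) (w : β → ℂ) : α × β → ℂ := fun p => v p.1 * w p.2

/-- `u = (|00⟩ + |11⟩)/√2`. -/
def uVec : Fin 2 × Fin 2 → ℂ := fun p =>
  if p = (0, 0) then (Real.sqrt 2 : ℂ)⁻¹ else if p = (1, 1) then (Real.sqrt 2 : ℂ)⁻¹ else 0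

/-- `v = cos(π/8)|00⟩ + sin(π/8)|11⟩`. -/
def vVec : Fin 2 × Fin 2 → ℂ := fun p =>
  if p = (0, 0) then (Real.cos (Real.pi / 8) : ℂ)
  else if p = (1, 1) then (Real.sin (Real.pi / 8) : ℂ) else 0

/-- `w = -sin(π/8)|00⟩ + cos(π/8)|11⟩`. -/
def wVec : Fin 2 × Fin 2 → ℂ := fun p =>
  if p = (0, 0) then -(Real.sin (Real.pi / 8) : ℂ)
  else if p = (1, 1) then (Real.cos (Real.pi / 8) : ℂ) else 0


private lemma psd_diag_nonneg {n : Type*} [Fintype n] [DecidableEq n] {M : Matrix n n ℂ}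
    (h : M.PosSemidef) (p : n) : 0 ≤ M p p := by
  exact h.diag_nonneg

/-- If `Q` is diagonal positive semidefinite and the Hermitian `Y₀` satisfies
`1_Y ⊗ Y₀ ≤ Q`, then the diagonal matrix obtained from the dephasing of `Y₀` by replacing
negative diagonal entries with `0` is also dual feasible, positive semidefinite, and has at
least as large a trace. -/
theorem stmt16 {y x : Type*} [Fintype y] [DecidableEq y] [Fintype x] [DecidableEq x]
    (Q : Matrix (y × x) (y × x) ℂ) (hQ : Q.PosSemidef) (hQdiag : Q.IsDiag)
    (Y₀ : Matrix x x ℂ) (hY₀ : Y₀.IsHermitian)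
    (hfeas : (Q - ((1 : Matrix y y ℂ) ⊗ₖ Y₀)).PosSemidef) :
    let Y : Matrix x x ℂ := Matrix.diagonal (fun i => ((max ((Y₀ i i).re) 0 : ℝ) : ℂ))
    (Q - ((1 : Matrix y y ℂ) ⊗ₖ Y)).PosSemidef ∧ Y.PosSemidef ∧
      Y₀.trace.re ≤ Y.trace.re := by
  intro Y
  -- key diagonal facts
  have hQd : ∀ p : y × x, 0 ≤ Q p p := psd_diag_nonneg hQ
  have hfd : ∀ p : y × x, 0 ≤ (Q - ((1 : Matrix y y ℂ) ⊗ₖ Y₀)) p p := psd_diag_nonneg hfeas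
  refine ⟨?_, ?_, ?_⟩
  · -- show Q - 1 ⊗ Y is diagonal with nonneg entries
    have hdiag : Q - ((1 : Matrix y y ℂ) ⊗ₖ Y) =
        Matrix.diagonal (fun p : y × x => Q p p - ((max ((Y₀ p.2 p.2).re) 0 : ℝ) : ℂ)) := by
      ext ⟨a, i⟩ ⟨b, j⟩
      by_cases h : (a, i) = (b, j)
      · obtain ⟨rfl, rfl⟩ := Prod.mk.injEq .. ▸ h
        simp [Matrix.kroneckerMap_apply, Matrix.one_apply, Y, Matrix.diagonal_apply]
      · have hQ0 : Q (a, i) (b, j) = 0 := hQdiag h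
        have : ¬ (a = b ∧ i = j) := by
          intro ⟨h1, h2⟩; exact h (by simp [h1, h2])
        simp only [Matrix.sub_apply, Matrix.kroneckerMap_apply, Matrix.one_apply,
          Matrix.diagonal_apply, hQ0, Y]
        rcases Decidable.em (a = b) with hab | hab
        · subst hab
          have hij : i ≠ j := fun hij => this ⟨rfl, hij⟩
          simp [Matrix.diagonal_apply, hij, h]
        · simp [hab, h]
    rw [hdiag]
    refine Matrix.posSemidef_diagonal_iff.mpr fun ⟨a, i⟩ => ?_
    have h1 := hfd (a, i)
    simp only [Matrix.sub_apply, Matrix.kroneckerMap_apply, Matrix.one_apply_eq, one_mul] at h1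
    have h2 := hQd (a, i)
    rw [Complex.nonneg_iff] at h1 h2 ⊢
    constructor
    · simp only [Complex.sub_re, Complex.ofReal_re]
      rcases le_or_gt ((Y₀ i i).re) 0 with h | h
      · rw [max_eq_right h]; simpa using h2.1
      · rw [max_eq_left h.le]; simpa [Complex.sub_re] using h1.1
    · have him : (Y₀ i i).im = 0 := by
        have := congrFun (congrFun hY₀ i) i
        have h3 : (Y₀ i i).im = -(Y₀ i i).im := by
          simpa [Matrix.conjTranspose_apply, Complex.ext_iff, eq_comm] using
            congrArg Complex.im this
        linarith
      simp [Complex.sub_im, ← h2.2]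
  · refine Matrix.posSemidef_diagonal_iff.mpr fun i => ?_
    rw [Complex.nonneg_iff]
    constructor
    · simp [le_max_iff]
    · simp
  · simp only [Matrix.trace, Matrix.diag, Matrix.diagonal_apply_eq, Y]
    rw [Complex.re_sum, Complex.re_sum]
    apply Finset.sum_le_sum
    intro i _
    simp [le_max_iff]


end
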